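/- Max-aggregation lower bound, case I1 = ∅ and s < |I2|: for every S2 ⊆ I2, S3 ⊆ I3 with |I2\S2| + |S3| ≤ s and every l ≤ x ≤ u, the maximum of x over S2 ∪ S3 is at least the (|I2| − s)-th smallest lower bound among {l(i) : i ∈ I2}; moreover this bound is tight. -/

import Mathlib

noncomputable def kthSmallest (Y : Multiset ℝ) (i : ℕ) : ℝ :=
  (Y.sort (· ≤ ·)).getD (i - 1) 0

/-- Maximum of `x` over a finset, valued in `EReal`, so that the
maximum over the empty set is `⊥ = -∞`. -/
noncomputable def maxE {ι : Type*} (S : Finset ι) (x : ι → ℝ) : EReal :=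
  S.sup fun i => ((x i : ℝ) : EReal)

private lemma countP_lt_le {L : List ℝ} (hs : L.Pairwise (· ≤ ·)) {j : ℕ} (hj : j < L.length)
    {c : ℝ} (hc : c = L[j]) :
    L.countP (fun a => decide (a < c)) ≤ j := by
  calc L.countP (fun a => decide (a < c))
      = (L.take j).countP (fun a => decide (a < c))
        + (L.drop j).countP (fun a => decide (a < c)) := by
        conv_lhs => rw [← List.take_append_drop j L, List.countP_append]
    _ ≤ j + 0 := by
        apply Nat.add_le_add
        · exact le_trans List.countP_le_length (List.length_take_le j L)
        · apply le_of_eq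
          rw [List.countP_eq_zero]
          intro a ha
          rw [List.mem_iff_getElem] at ha
          obtain ⟨n, hn, rfl⟩ := ha
          rw [List.getElem_drop]
          simp only [decide_eq_true_eq, not_lt, hc]
          have := hs.rel_get_of_le (a := ⟨j, hj⟩)
            (b := ⟨j + n, by simp at hn ⊢; omega⟩) (by simp)
          simpa using this
    _ = j := by omega

private lemma countP_le_ge {L : List ℝ} (hs : L.Pairwise (· ≤ ·)) {j : ℕ} (hj : j < L.length)
    {c : ℝ} (hc : c = L[j]) :
    j + 1 ≤ L.countP (fun a => decide (a ≤ c)) := by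
  have htake : (L.take (j+1)).countP (fun a => decide (a ≤ c)) = j + 1 := by
    have hlen : (L.take (j+1)).length = j + 1 := by simp; omega
    have hall : ∀ a ∈ L.take (j+1), (fun a => decide (a ≤ c)) a = true := by
      intro a ha
      rw [List.mem_iff_getElem] at ha
      obtain ⟨n, hn, rfl⟩ := ha
      rw [List.getElem_take]
      simp only [decide_eq_true_eq, hc]
      have := hs.rel_get_of_le (a := ⟨n, by simp at hn; omega⟩) (b := ⟨j, hj⟩)
        (by simp at hn ⊢; omega)
      simpa using this
    rw [List.countP_eq_length.2 hall, hlen]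
  calc j + 1 = (L.take (j+1)).countP (fun a => decide (a ≤ c)) := htake.symm
    _ ≤ L.countP (fun a => decide (a ≤ c)) := by
        conv_rhs => rw [← List.take_append_drop (j+1) L, List.countP_append]
        omega

/-- Max-aggregation lower bound, case  and . -/
theorem stmt5 {ι : Type*} [DecidableEq ι] (I2 I3 : Finset ι)
    (h23 : Disjoint I2 I3)
    (l u : ι → ℝ) (hlu : ∀ i ∈ I2 ∪ I3, l i ≤ u i) (s : ℕ) (hs : s < I2.card) :
    (∀ S2 ⊆ I2, ∀ S3 ⊆ I3, (I2 \ S2).card + S3.card ≤ s →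
      ∀ x : ι → ℝ, (∀ i ∈ I2 ∪ I3, l i ≤ x i ∧ x i ≤ u i) →
        ((kthSmallest (I2.val.map l) (I2.card - s) : ℝ) : EReal) ≤ maxE (S2 ∪ S3) x) ∧
    (∃ S2 ⊆ I2, ∃ S3 ⊆ I3, (I2 \ S2).card + S3.card ≤ s ∧
      ∃ x : ι → ℝ, (∀ i ∈ I2 ∪ I3, l i ≤ x i ∧ x i ≤ u i) ∧
        maxE (S2 ∪ S3) x = ((kthSmallest (I2.val.map l) (I2.card - s) : ℝ) : EReal)) := by
  classical
  set m := I2.card with hm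
  set k := m - s with hk
  have hk1 : 1 ≤ k := by omega
  set M := I2.val.map l with hM
  set Ls := M.sort (· ≤ ·) with hLs
  have hlen : Ls.length = m := by
    rw [hLs, Multiset.length_sort, hM, Multiset.card_map]
    rfl
  have hkm : k - 1 < Ls.length := by omega
  set L : ℝ := Ls[k-1] with hL
  have hkth : kthSmallest M k = L := by
    rw [kthSmallest, List.getD_eq_getElem _ _ hkm]
  -- counting facts
  have hcountA : (I2.filter (fun i => l i < L)).card ≤ k - 1 := by
    have h1 : Multiset.countP (fun a => a < L) M ≤ k - 1 := by
      rw [← Multiset.sort_eq (α := ℝ) M (· ≤ ·), Multiset.coe_countP]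
      exact countP_lt_le (Multiset.pairwise_sort _ _) hkm rfl
    rw [hM, Multiset.countP_map] at h1
    simpa [Finset.card, Finset.filter] using h1
  have hcountB : k ≤ (I2.filter (fun i => l i ≤ L)).card := by
    have h1 : k ≤ Multiset.countP (fun a => a ≤ L) M := by
      rw [← Multiset.sort_eq (α := ℝ) M (· ≤ ·), Multiset.coe_countP]
      have := countP_le_ge (Multiset.pairwise_sort M (· ≤ ·)) hkm (c := L) rfl
      omega
    rw [hM, Multiset.countP_map] at h1
    simpa [Finset.card, Finset.filter] using h1
  -- helper: any S2 ⊆ I2 with card ≥ k has an element with L ≤ l i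
  have hwit : ∀ S2 ⊆ I2, k ≤ S2.card → ∃ i ∈ S2, L ≤ l i := by
    intro S2 hS2 hcard
    by_contra hcon
    push_neg at hcon
    have hsub : S2 ⊆ I2.filter (fun i => l i < L) := by
      intro i hi
      exact Finset.mem_filter.2 ⟨hS2 hi, hcon i hi⟩
    have := Finset.card_le_card hsub
    omega
  constructor
  · intro S2 hS2 S3 hS3 hbudget x hx
    have hcard : k ≤ S2.card := by
      have h1 : (I2 \ S2).card = m - S2.card := Finset.card_sdiff_of_subset hS2
      have h2 : S2.card ≤ m := Finset.card_le_card hS2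
      omega
    obtain ⟨i, hiS2, hiL⟩ := hwit S2 hS2 hcard
    have hxi : L ≤ x i := le_trans hiL (hx i (Finset.mem_union_left _ (hS2 hiS2))).1
    calc ((kthSmallest M k : ℝ) : EReal) = ((L : ℝ) : EReal) := by rw [hkth]
      _ ≤ ((x i : ℝ) : EReal) := EReal.coe_le_coe_iff.2 hxi
      _ ≤ maxE (S2 ∪ S3) x := by
          rw [maxE]
          exact Finset.le_sup (f := fun i => ((x i : ℝ) : EReal)) (Finset.mem_union_left _ hiS2)
  · refine ⟨I2.filter (fun i => l i ≤ L), Finset.filter_subset _ _, ∅, Finset.empty_subset _,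
      ?_, l, fun i hi => ⟨le_refl _, hlu i hi⟩, ?_⟩
    · have h1 : (I2 \ I2.filter (fun i => l i ≤ L)).card = m - (I2.filter (fun i => l i ≤ L)).card :=
        Finset.card_sdiff_of_subset (Finset.filter_subset _ _)
      simp only [Finset.card_empty]
      omega
    · rw [hkth]
      obtain ⟨e, he, heL⟩ := hwit _ (Finset.filter_subset _ _) hcountB
      have heL' : l e = L := le_antisymm (Finset.mem_filter.1 he).2 heL
      apply le_antisymm
      · rw [maxE]
        apply Finset.sup_le
        intro i hi
        rcases Finset.mem_union.1 hi with hi2 | hi3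
        · exact EReal.coe_le_coe_iff.2 (Finset.mem_filter.1 hi2).2
        · exact absurd hi3 (Finset.notMem_empty i)
      · calc ((L : ℝ) : EReal) = ((l e : ℝ) : EReal) := by rw [heL']
          _ ≤ _ := by
            rw [maxE]
            exact Finset.le_sup (f := fun i => ((l i : ℝ) : EReal)) (Finset.mem_union_left _ he)
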